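/- Let W, D be n×n real matrices with nonnegative entries and let α, β ≥ 0 satisfy α ≤ 1/(4‖W‖₁) and β ≤ 1/(4‖D‖₁). Then the GRASP operator G maps S = {s ∈ ℝ^n : ‖s − 1‖_∞ ≤ 1} into itself and is a contraction on S (with respect to ‖·‖_∞). Consequently G admits a unique fixed point s* ∈ S, and for every s₀ ∈ S the iteration s_{k+1} = G(s_k) converges to s*. -/

import Mathlib

open Finset

/-- Maximum absolute column sum norm `‖A‖₁ = max_j ∑_i |A_{ij}|`. -/
noncomputable def matNorm1 {n : ℕ} (A : Matrix (Fin n) (Fin n) ℝ) : ℝ :=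
  ⨆ j, ∑ i, |A i j|

/-- The GRASP operator `G(s)_i = (1 + β (Dᵀ s)_i) / (1 + α (Wᵀ s)_i)`. -/
noncomputable def grasp {n : ℕ} (W D : Matrix (Fin n) (Fin n) ℝ) (α β : ℝ)
    (s : Fin n → ℝ) : Fin n → ℝ :=
  fun i => (1 + β * ∑ k, D k i * s k) / (1 + α * ∑ k, W k i * s k)

lemma matNorm1_nonneg {n : ℕ} (A : Matrix (Fin n) (Fin n) ℝ) : 0 ≤ matNorm1 A :=
  Real.iSup_nonneg fun j => Finset.sum_nonneg fun i _ => abs_nonneg _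

lemma colsum_le_matNorm1 {n : ℕ} (A : Matrix (Fin n) (Fin n) ℝ)
    (hA : ∀ i j, 0 ≤ A i j) (j : Fin n) : ∑ i, A i j ≤ matNorm1 A := by
  have h : ∑ i, A i j = ∑ i, |A i j| := by
    refine Finset.sum_congr rfl fun i _ => (abs_of_nonneg (hA i j)).symm
  rw [h, matNorm1]
  exact le_ciSup (f := fun j => ∑ i, |A i j|) (Set.Finite.bddAbove (Set.finite_range _)) j

lemma sum_mul_le {n : ℕ} (A : Matrix (Fin n) (Fin n) ℝ) (hA : ∀ i j, 0 ≤ A i j)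
    (s : Fin n → ℝ) (hs : ∀ k, 0 ≤ s k ∧ s k ≤ 2) (i : Fin n) :
    0 ≤ ∑ k, A k i * s k ∧ ∑ k, A k i * s k ≤ 2 * matNorm1 A := by
  constructor
  · exact Finset.sum_nonneg fun k _ => mul_nonneg (hA k i) (hs k).1
  · calc ∑ k, A k i * s k ≤ ∑ k, A k i * 2 :=
          Finset.sum_le_sum fun k _ => mul_le_mul_of_nonneg_left (hs k).2 (hA k i)
    _ = 2 * ∑ k, A k i := by rw [← Finset.sum_mul]; ring
    _ ≤ 2 * matNorm1 A := by
        have := colsum_le_matNorm1 A hA i; linarith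

lemma sum_mul_diff_le {n : ℕ} (A : Matrix (Fin n) (Fin n) ℝ) (hA : ∀ i j, 0 ≤ A i j)
    (x y : Fin n → ℝ) (i : Fin n) :
    |(∑ k, A k i * x k) - ∑ k, A k i * y k| ≤ matNorm1 A * ‖x - y‖ := by
  have h1 : (∑ k, A k i * x k) - ∑ k, A k i * y k = ∑ k, A k i * (x k - y k) := by
    rw [← Finset.sum_sub_distrib]; exact Finset.sum_congr rfl fun k _ => by ring
  rw [h1]
  calc |∑ k, A k i * (x k - y k)| ≤ ∑ k, |A k i * (x k - y k)| := Finset.abs_sum_le_sum_abs _ _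
    _ ≤ ∑ k, A k i * ‖x - y‖ := by
        refine Finset.sum_le_sum fun k _ => ?_
        rw [abs_mul, abs_of_nonneg (hA k i)]
        refine mul_le_mul_of_nonneg_left ?_ (hA k i)
        have := norm_le_pi_norm (x - y) k
        simpa [Real.norm_eq_abs] using this
    _ = (∑ k, A k i) * ‖x - y‖ := by rw [Finset.sum_mul]
    _ ≤ matNorm1 A * ‖x - y‖ :=
        mul_le_mul_of_nonneg_right (colsum_le_matNorm1 A hA i) (norm_nonneg _)

lemma half_bound (a t N : ℝ) (ha : 0 ≤ a) (ht : t ≤ 2*N) (h : a*N ≤ 1/4) : a*t ≤ 1/2 := by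
  nlinarith [mul_le_mul_of_nonneg_left ht ha]

lemma quarter_bound (a d N r : ℝ) (ha : 0 ≤ a) (hd : |d| ≤ N*r) (h : a*N ≤ 1/4)
    (hr : 0 ≤ r) : a * |d| ≤ 1/4 * r := by
  nlinarith [mul_le_mul_of_nonneg_left hd ha, mul_le_mul_of_nonneg_right h hr]

/-- GRASP convergence theorem: for nonnegative `W, D` with `α ≤ 1/(4‖W‖₁)` and
`β ≤ 1/(4‖D‖₁)`, the GRASP operator maps `S = {s : ‖s - 1‖_∞ ≤ 1}` into itself, is a
contraction on `S`, admits a unique fixed point `s* ∈ S`, and the iteration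
`s_{k+1} = G(s_k)` converges to `s*` from any `s₀ ∈ S`. -/
theorem grasp_convergence {n : ℕ} (W D : Matrix (Fin n) (Fin n) ℝ)
    (hW : ∀ i j, 0 ≤ W i j) (hD : ∀ i j, 0 ≤ D i j)
    (α β : ℝ) (hα : 0 ≤ α) (hβ : 0 ≤ β)
    (hα' : α ≤ 1 / (4 * matNorm1 W)) (hβ' : β ≤ 1 / (4 * matNorm1 D)) :
    (∀ s : Fin n → ℝ, ‖s - 1‖ ≤ 1 → ‖grasp W D α β s - 1‖ ≤ 1) ∧
    (∃ ℓ : ℝ, 0 ≤ ℓ ∧ ℓ < 1 ∧ ∀ x y : Fin n → ℝ, ‖x - 1‖ ≤ 1 → ‖y - 1‖ ≤ 1 →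
      ‖grasp W D α β x - grasp W D α β y‖ ≤ ℓ * ‖x - y‖) ∧
    ∃ s : Fin n → ℝ, ‖s - 1‖ ≤ 1 ∧ grasp W D α β s = s ∧
      (∀ s' : Fin n → ℝ, ‖s' - 1‖ ≤ 1 → grasp W D α β s' = s' → s' = s) ∧
      ∀ s₀ : Fin n → ℝ, ‖s₀ - 1‖ ≤ 1 →
        Filter.Tendsto (fun k => (grasp W D α β)^[k] s₀) Filter.atTop (nhds s) := by
  set G := grasp W D α β with hGdef
  have hNW := matNorm1_nonneg W
  have hND := matNorm1_nonneg D
  have hαW : α * matNorm1 W ≤ 1/4 := by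
    rcases eq_or_lt_of_le hNW with h | h
    · rw [← h]; norm_num
    · rw [le_div_iff₀ (by positivity)] at hα'; nlinarith
  have hβD : β * matNorm1 D ≤ 1/4 := by
    rcases eq_or_lt_of_le hND with h | h
    · rw [← h]; norm_num
    · rw [le_div_iff₀ (by positivity)] at hβ'; nlinarith
  -- coordinates of elements of S lie in [0,2]
  have hmem : ∀ s : Fin n → ℝ, ‖s - 1‖ ≤ 1 → ∀ k, 0 ≤ s k ∧ s k ≤ 2 := by
    intro s hs k
    have h := (norm_le_pi_norm (s - 1) k).trans hs
    simp only [Pi.sub_apply, Pi.one_apply, Real.norm_eq_abs] at h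
    have := abs_le.1 h
    constructor <;> linarith [this.1, this.2]
  -- pointwise self-map bound
  have hmap : ∀ s : Fin n → ℝ, ‖s - 1‖ ≤ 1 → ∀ i, |G s i - 1| ≤ 1 := by
    intro s hs i
    have hw := sum_mul_le W hW s (hmem s hs) i
    have hd := sum_mul_le D hD s (hmem s hs) i
    set w := ∑ k, W k i * s k
    set d := ∑ k, D k i * s k
    have hαw : 0 ≤ α * w ∧ α * w ≤ 1/2 :=
      ⟨mul_nonneg hα hw.1, half_bound α w (matNorm1 W) hα hw.2 hαW⟩
    have hβd : 0 ≤ β * d ∧ β * d ≤ 1/2 :=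
      ⟨mul_nonneg hβ hd.1, half_bound β d (matNorm1 D) hβ hd.2 hβD⟩
    have hG : G s i = (1 + β * d) / (1 + α * w) := by simp only [hGdef, grasp]; rfl
    have hden : (1:ℝ) ≤ 1 + α * w := by linarith [hαw.1]
    have hden0 : (0:ℝ) < 1 + α * w := by linarith
    rw [hG, div_sub_one (by positivity), abs_div, abs_of_pos hden0]
    have hnum : |1 + β * d - (1 + α * w)| ≤ 1/2 := by
      rw [abs_le]; constructor <;> linarith [hαw.1, hαw.2, hβd.1, hβd.2]
    calc |1 + β * d - (1 + α * w)| / (1 + α * w) ≤ |1 + β * d - (1 + α * w)| / 1 :=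
          div_le_div_of_nonneg_left (abs_nonneg _) one_pos hden |>.trans_eq rfl
      _ ≤ 1 := by rw [div_one]; linarith
  -- pointwise contraction bound
  have hcon : ∀ x y : Fin n → ℝ, ‖x - 1‖ ≤ 1 → ‖y - 1‖ ≤ 1 → ∀ i,
      |G x i - G y i| ≤ 3/4 * ‖x - y‖ := by
    intro x y hx hy i
    have hwx := sum_mul_le W hW x (hmem x hx) i
    have hwy := sum_mul_le W hW y (hmem y hy) i
    have hdx := sum_mul_le D hD x (hmem x hx) i
    have hdy := sum_mul_le D hD y (hmem y hy) i
    set wx := ∑ k, W k i * x k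
    set wy := ∑ k, W k i * y k
    set dx := ∑ k, D k i * x k
    set dy := ∑ k, D k i * y k
    set r := ‖x - y‖ with hr
    have hr0 : 0 ≤ r := norm_nonneg _
    have hWd : |wx - wy| ≤ matNorm1 W * r := sum_mul_diff_le W hW x y i
    have hDd : |dx - dy| ≤ matNorm1 D * r := sum_mul_diff_le D hD x y i
    have hBx : (1:ℝ) ≤ 1 + α * wx ∧ 1 + α * wx ≤ 3/2 :=
      ⟨by linarith [mul_nonneg hα hwx.1],
       by linarith [half_bound α wx (matNorm1 W) hα hwx.2 hαW]⟩
    have hBy : (1:ℝ) ≤ 1 + α * wy ∧ 1 + α * wy ≤ 3/2 :=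
      ⟨by linarith [mul_nonneg hα hwy.1],
       by linarith [half_bound α wy (matNorm1 W) hα hwy.2 hαW]⟩
    have hAy : (1:ℝ) ≤ 1 + β * dy ∧ 1 + β * dy ≤ 3/2 :=
      ⟨by linarith [mul_nonneg hβ hdy.1],
       by linarith [half_bound β dy (matNorm1 D) hβ hdy.2 hβD]⟩
    have hGx : G x i = (1 + β * dx) / (1 + α * wx) := by simp only [hGdef, grasp]; rfl
    have hGy : G y i = (1 + β * dy) / (1 + α * wy) := by simp only [hGdef, grasp]; rfl
    have hBx0 : (0:ℝ) < 1 + α * wx := by linarith [hBx.1]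
    have hBy0 : (0:ℝ) < 1 + α * wy := by linarith [hBy.1]
    rw [hGx, hGy, div_sub_div _ _ (ne_of_gt hBx0) (ne_of_gt hBy0), abs_div]
    have hnum : |(1 + β * dx) * (1 + α * wy) - (1 + α * wx) * (1 + β * dy)| ≤ 3/4 * r := by
      have e : (1 + β * dx) * (1 + α * wy) - (1 + α * wx) * (1 + β * dy)
          = (β * (dx - dy)) * (1 + α * wy) + (1 + β * dy) * (α * (wy - wx)) := by ring
      rw [e]
      calc |(β * (dx - dy)) * (1 + α * wy) + (1 + β * dy) * (α * (wy - wx))|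
          ≤ |(β * (dx - dy)) * (1 + α * wy)| + |(1 + β * dy) * (α * (wy - wx))| := abs_add_le _ _
        _ = |β * (dx - dy)| * (1 + α * wy) + (1 + β * dy) * |α * (wy - wx)| := by
            rw [abs_mul (β * (dx - dy)) (1 + α * wy), abs_mul (1 + β * dy) (α * (wy - wx)),
              abs_of_pos hBy0, abs_of_pos (by linarith [hAy.1] : (0:ℝ) < 1 + β * dy)]
        _ ≤ 3/4 * r := by
            have h1 : |β * (dx - dy)| ≤ 1/4 * r := by
              rw [abs_mul, abs_of_nonneg hβ]
              exact quarter_bound β (dx - dy) (matNorm1 D) r hβ hDd hβD hr0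
            have h2 : |α * (wy - wx)| ≤ 1/4 * r := by
              rw [abs_mul, abs_of_nonneg hα, abs_sub_comm]
              exact quarter_bound α (wx - wy) (matNorm1 W) r hα hWd hαW hr0
            have h3 : |β * (dx - dy)| * (1 + α * wy) ≤ 1/4 * r * (3/2) :=
              mul_le_mul h1 hBy.2 (by linarith [hBy.1]) (by linarith)
            have h4 : (1 + β * dy) * |α * (wy - wx)| ≤ 3/2 * (1/4 * r) :=
              mul_le_mul hAy.2 h2 (abs_nonneg _) (by norm_num)
            linarith
    have hden1 : (1:ℝ) ≤ |(1 + α * wx) * (1 + α * wy)| := by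
      rw [abs_of_pos (by positivity)]; nlinarith [hBx.1, hBy.1]
    calc |(1 + β * dx) * (1 + α * wy) - (1 + α * wx) * (1 + β * dy)| / |(1 + α * wx) * (1 + α * wy)|
        ≤ |(1 + β * dx) * (1 + α * wy) - (1 + α * wx) * (1 + β * dy)| / 1 :=
          div_le_div_of_nonneg_left (abs_nonneg _) one_pos hden1
      _ ≤ 3/4 * r := by rw [div_one]; exact hnum
  -- norm versions
  have hmapN : ∀ s : Fin n → ℝ, ‖s - 1‖ ≤ 1 → ‖G s - 1‖ ≤ 1 := by
    intro s hs
    rw [pi_norm_le_iff_of_nonneg (by norm_num)]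
    intro i
    simpa [Real.norm_eq_abs] using hmap s hs i
  have hconN : ∀ x y : Fin n → ℝ, ‖x - 1‖ ≤ 1 → ‖y - 1‖ ≤ 1 →
      ‖G x - G y‖ ≤ 3/4 * ‖x - y‖ := by
    intro x y hx hy
    rw [pi_norm_le_iff_of_nonneg (by positivity)]
    intro i
    simpa [Real.norm_eq_abs] using hcon x y hx hy i
  refine ⟨hmapN, ⟨3/4, by norm_num, by norm_num, fun x y hx hy => hconN x y hx hy⟩, ?_⟩
  -- Banach fixed point on the closed ball
  set K : Set (Fin n → ℝ) := Metric.closedBall (1 : Fin n → ℝ) 1 with hK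
  have hKmem : ∀ s : Fin n → ℝ, s ∈ K ↔ ‖s - 1‖ ≤ 1 := by
    intro s; rw [hK, Metric.mem_closedBall, dist_eq_norm]
  have hKclosed : IsClosed K := Metric.isClosed_closedBall
  haveI : CompleteSpace K := hKclosed.completeSpace_coe
  haveI : Nonempty K := ⟨⟨1, by rw [hKmem]; simp⟩⟩
  set f : K → K := fun x => ⟨G x.1, (hKmem _).2 (hmapN x.1 ((hKmem _).1 x.2))⟩ with hf
  have hlip : LipschitzWith (3/4 : NNReal) f := by
    apply LipschitzWith.of_dist_le_mul
    intro x y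
    rw [Subtype.dist_eq, Subtype.dist_eq, dist_eq_norm, dist_eq_norm]
    have hc : ((3/4 : NNReal) : ℝ) = 3/4 := by norm_num
    rw [hc]
    exact hconN x.1 y.1 ((hKmem _).1 x.2) ((hKmem _).1 y.2)
  have hcw : ContractingWith (3/4 : NNReal) f :=
    ⟨by rw [← NNReal.coe_lt_coe]; push_cast; norm_num, hlip⟩
  set sK := hcw.fixedPoint f with hsK
  have hfix : f sK = sK := hcw.fixedPoint_isFixedPt
  have hiter : ∀ (k : ℕ) (x : K), ((f^[k] x : K) : Fin n → ℝ) = G^[k] x.1 := by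
    intro k
    induction k with
    | zero => intro x; simp
    | succ m ih =>
      intro x
      rw [Function.iterate_succ_apply', Function.iterate_succ_apply']
      have : (f (f^[m] x)).1 = G ((f^[m] x : K) : Fin n → ℝ) := rfl
      rw [this, ih x]
  refine ⟨sK.1, (hKmem _).1 sK.2, ?_, ?_, ?_⟩
  · have : (f sK).1 = sK.1 := by rw [hfix]
    exact this
  · intro s' hs' hfix'
    have h1 : ‖s' - sK.1‖ ≤ 3/4 * ‖s' - sK.1‖ := by
      have := hconN s' sK.1 hs' ((hKmem _).1 sK.2)
      rw [hfix'] at this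
      have h2 : G sK.1 = sK.1 := by
        have : (f sK).1 = sK.1 := by rw [hfix]
        exact this
      rw [h2] at this
      exact this
    have h0 : ‖s' - sK.1‖ = 0 := by linarith [norm_nonneg (s' - sK.1)]
    have := norm_eq_zero.1 h0
    exact sub_eq_zero.1 this
  · intro s₀ hs₀
    have ht := hcw.tendsto_iterate_fixedPoint (⟨s₀, (hKmem _).2 hs₀⟩ : K)
    have ht2 := (continuous_subtype_val.tendsto sK).comp ht
    have heq : (fun k => ((f^[k] (⟨s₀, (hKmem _).2 hs₀⟩ : K) : K) : Fin n → ℝ))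
        = fun k => G^[k] s₀ := by
      funext k; exact hiter k _
    exact Filter.Tendsto.congr (fun k => hiter k _) ht2
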